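/- Let f be a feasible tree solution with tree structure (T,L,U). Then the number Fea of feasible integer flows of the network satisfies Σ_{a∉T} u(C_a) ≤ Fea ≤ Π_{a∉T} (u_a + 1), where the sum and the product range over all non-tree arcs. -/

import Mathlib

open scoped Classical
noncomputable section

/-- A network: finite directed graph with arc set `A`, lower/upper capacities `l`, `u`,
node balances `b` and arc costs `c`. -/
structure Network (V : Type) [Fintype V] [DecidableEq V] where
  A : Finset (V × V)
  l : V × V → ℤ
  u : V × V → ℤ
  b : V → ℤ
  c : V × V → ℝ

variable {V : Type} [Fintype V] [DecidableEq V]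

namespace Network

/-- No anti-parallel arcs, and `0 ≤ l ≤ u` on every arc. -/
def Wellformed (N : Network V) : Prop :=
  (∀ a ∈ N.A, (a.2, a.1) ∉ N.A) ∧ ∀ a ∈ N.A, 0 ≤ N.l a ∧ N.l a ≤ N.u a

/-- A feasible integer flow: capacity constraints, vanishing outside `A`, flow balance. -/
def Feasible (N : Network V) (f : V × V → ℤ) : Prop :=
  (∀ a ∈ N.A, N.l a ≤ f a ∧ f a ≤ N.u a) ∧
  (∀ a, a ∉ N.A → f a = 0) ∧
  ∀ i : V, ((∑ a ∈ N.A.filter fun a => a.1 = i, f a)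
         - ∑ a ∈ N.A.filter fun a => a.2 = i, f a) = N.b i

/-- The cost of a flow. -/
def cost (N : Network V) (f : V × V → ℤ) : ℝ := ∑ a ∈ N.A, N.c a * (f a : ℝ)

/-- A flow is optimal if it is feasible of minimum cost. -/
def Optimal (N : Network V) (f : V × V → ℤ) : Prop :=
  N.Feasible f ∧ ∀ g, N.Feasible g → N.cost f ≤ N.cost g

/-- The arc set `A_f` of the residual graph `D_f`. -/
def resArcs (N : Network V) (f : V × V → ℤ) : Finset (V × V) :=
  N.A.filter (fun a => f a < N.u a) ∪ (N.A.filter fun a => N.l a < f a).image Prod.swap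

/-- Residual cost of a residual arc: `c_{ij}` on forward arcs, `-c_{ji}` on backward arcs. -/
def resCost (N : Network V) (a : V × V) : ℝ :=
  if a ∈ N.A then N.c a else -N.c (a.2, a.1)

/-- Residual capacity of a residual arc. -/
def resCap (N : Network V) (f : V × V → ℤ) (a : V × V) : ℤ :=
  if a ∈ N.A then N.u a - f a else f (a.2, a.1) - N.l (a.2, a.1)

/-- Reduced cost of an arc of `A` w.r.t. node potentials `y`. -/
def redCost (N : Network V) (y : V → ℝ) (a : V × V) : ℝ := N.c a + y a.1 - y a.2

/-- Residual reduced cost of a residual arc w.r.t. node potentials `y`. -/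
def resRedCost (N : Network V) (y : V → ℝ) (a : V × V) : ℝ := N.resCost a + y a.1 - y a.2

/-- `y` is an optimal node potential for `f`. -/
def OptPotential (N : Network V) (f : V × V → ℤ) (y : V → ℝ) : Prop :=
  ∀ a ∈ N.resArcs f, 0 ≤ N.resRedCost y a

end Network

/-- A (simple, directed) cycle: a nonempty duplicate-free list of at least two vertices,
traversed cyclically. -/
structure Cyc (V : Type) where
  verts : List V
  nodup : verts.Nodup
  two_le : 2 ≤ verts.length

/-- The arcs of a cycle: consecutive (cyclic) pairs of vertices. -/
def Cyc.arcs (C : Cyc V) : Finset (V × V) :=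
  (C.verts.zip (C.verts.rotate 1)).toFinset

/-- A cycle is proper if it contains no pair of anti-parallel arcs. -/
def Cyc.Proper (C : Cyc V) : Prop := ∀ a ∈ C.arcs, (a.2, a.1) ∉ C.arcs

/-- The incidence vector `χ(C)` of a cycle. -/
def Cyc.chi (C : Cyc V) : V × V → ℤ :=
  fun a => if a ∈ C.arcs then 1 else if (a.2, a.1) ∈ C.arcs then -1 else 0

namespace Network

/-- `C` is a directed cycle of the residual graph `D_f`. -/
def IsResCycle (N : Network V) (f : V × V → ℤ) (C : Cyc V) : Prop :=
  ∀ a ∈ C.arcs, a ∈ N.resArcs f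

/-- The cost `c(f,C)` of a cycle in the residual graph. -/
def cycCost (N : Network V) (C : Cyc V) : ℝ := ∑ a ∈ C.arcs, N.resCost a

end Network

/-- The consecutive (cyclic) pairs of a list of vertices. -/
def cyclePairs (vs : List V) : List (V × V) := vs.zip (vs.rotate 1)

/-- `C` is the edge set of a cycle of the underlying undirected graph of the digraph with
arc set `A`: the arcs of `A` whose underlying edges are the consecutive (cyclic) pairs of
a duplicate-free list of at least three vertices. -/
def IsUCycle (A C : Finset (V × V)) : Prop :=
  ∃ vs : List V, vs.Nodup ∧ 3 ≤ vs.length ∧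
    (∀ p ∈ cyclePairs vs, p ∈ A ∨ p.swap ∈ A) ∧
    C = A.filter fun a => a ∈ cyclePairs vs ∨ a.swap ∈ cyclePairs vs

/-- `T ⊆ A` is a spanning tree of the underlying undirected graph: it connects all
vertices and has `|V| - 1` edges. -/
def IsSpanningTree (A T : Finset (V × V)) : Prop :=
  T ⊆ A ∧ (∀ u v : V, Relation.ReflTransGen (fun x y => (x, y) ∈ T ∨ (y, x) ∈ T) u v) ∧
    T.card + 1 = Fintype.card V

/-- `C` is the unique (fundamental) cycle induced by the non-tree arc `a`: the cycle
consisting of `a` together with tree edges only. -/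
def IsFundCycle (A T : Finset (V × V)) (a : V × V) (C : Finset (V × V)) : Prop :=
  IsUCycle A C ∧ a ∈ C ∧ C \ {a} ⊆ T

namespace Network

/-- A tree solution: a feasible flow together with a spanning tree `T` and a partition
`A ∖ T = L ∪ U` such that `f = l` on `L` and `f = u` on `U`. -/
def IsTreeSolution (N : Network V) (f : V × V → ℤ) (T L U : Finset (V × V)) : Prop :=
  N.Feasible f ∧ IsSpanningTree N.A T ∧ L ∪ U = N.A \ T ∧ Disjoint L U ∧
    (∀ a ∈ L, f a = N.l a) ∧ ∀ a ∈ U, f a = N.u a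

end Network

/-- `vs` is a traversal (in the direction of `a`, starting with `a`) of the unique cycle
induced by the non-tree arc `a`: `a` together with the tree path from `a.2` to `a.1`. -/
def IsInducedCycleList (A T : Finset (V × V)) (a : V × V) (vs : List V) : Prop :=
  vs.Nodup ∧ (∃ rest, vs = a.1 :: a.2 :: rest) ∧
    ∀ p ∈ cyclePairs vs, p = a ∨ p ∈ T ∨ p.swap ∈ T

/-- The incidence vector of the cycle traversal `vs` (in traversal direction). -/
def chiList (vs : List V) : V × V → ℤ := fun e =>
  if e ∈ cyclePairs vs then 1 else if e.swap ∈ cyclePairs vs then -1 else 0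

/-- The incidence vector `χ(C_a)` of the induced cycle `C_a` (given by the traversal list
`vs` in the direction of `a`), oriented in the direction of `a` if `a ∈ L` and opposite to
`a` otherwise, and supported on the arc set `A` of the network. -/
def chiInd (N : Network V) (L : Finset (V × V)) (a : V × V) (vs : List V) : V × V → ℤ :=
  fun e => if e ∈ N.A then (if a ∈ L then chiList vs e else -chiList vs e) else 0

/-- The cost `c(C_a) = ∑_{e ∈ A} χ_e(C_a) c_e` of an induced cycle. -/
def indCycleCost (N : Network V) (L : Finset (V × V)) (a : V × V) (vs : List V) : ℝ :=
  ∑ e ∈ N.A, (chiInd N L a vs e : ℝ) * N.c e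

/-- The equivalent undirected cycle `C_D ⊆ A` of a directed cycle `C` of the residual
graph: the arcs of `A` traversed by `C` in either direction. -/
def Network.equivCycle (N : Network V) (C : Cyc V) : Finset (V × V) :=
  N.A.filter fun a => a ∈ C.arcs ∨ (a.2, a.1) ∈ C.arcs

/-- The free capacity `u(C_a)` of an induced cycle with incidence vector `χ`:
the minimum over the arcs `e` of the cycle of `u_e − f_e` if `χ_e = 1` and of `f_e`
if `χ_e = −1`. -/
def freeCap (N : Network V) (f : V × V → ℤ) (χ : V × V → ℤ) : ℤ :=
  sInf {x : ℤ | ∃ e ∈ N.A, χ e ≠ 0 ∧ x = if χ e = 1 then N.u e - f e else f e}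

set_option linter.unusedSectionVars false

section FeaHelpers

def conn (E : Finset (V × V)) : V → V → Prop :=
  Relation.ReflTransGen (fun x y => (x, y) ∈ E ∨ (y, x) ∈ E)

lemma conn_symm {E : Finset (V × V)} {x y : V} (h : conn E x y) : conn E y x := by
  induction h with
  | refl => exact .refl
  | tail _ hbc ih =>
    exact Relation.ReflTransGen.trans (Relation.ReflTransGen.single hbc.symm) ih

lemma conn_mono {E E' : Finset (V × V)} (h : E ⊆ E') {x y : V} (hc : conn E x y) :
    conn E' x y := by
  induction hc with
  | refl => exact .refl
  | tail _ hbc ih => exact ih.tail (hbc.imp (fun hh => h hh) (fun hh => h hh))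

def compSetoid (E : Finset (V × V)) : Setoid V :=
  ⟨conn E, ⟨fun _ => .refl, conn_symm, Relation.ReflTransGen.trans⟩⟩

def ncomp (E : Finset (V × V)) : ℕ := Fintype.card (Quotient (compSetoid E))

lemma ncomp_empty : ncomp (∅ : Finset (V × V)) = Fintype.card V := by
  refine (Fintype.card_of_bijective (f := Quotient.mk (compSetoid (∅ : Finset (V × V)))) ?_).symm
  constructor
  · intro a b hab
    have h : conn (∅ : Finset (V × V)) a b := Quotient.exact hab
    induction h with
    | refl => rfl
    | tail _ hbc _ => simp at hbc
  · exact Quotient.exists_rep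

lemma conn_insert {E : Finset (V × V)} {e1 e2 x y : V}
    (h : conn (insert (e1, e2) E) x y) :
    conn E x y ∨ (conn E x e1 ∧ conn E e2 y) ∨ (conn E x e2 ∧ conn E e1 y) := by
  induction h with
  | refl => exact Or.inl .refl
  | @tail b c _ hbc ih =>
    have hcase : ((b = e1 ∧ c = e2) ∨ (b, c) ∈ E) ∨ ((c = e1 ∧ b = e2) ∨ (c, b) ∈ E) := by
      rcases hbc with h | h <;> simp [Finset.mem_insert, Prod.ext_iff] at h <;> tauto
    rcases hcase with (⟨hb, hc⟩ | hE) | (⟨hc, hb⟩ | hE)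
    · subst hb; subst hc
      rcases ih with h1 | ⟨h1, _⟩ | ⟨h1, _⟩
      · exact Or.inr (Or.inl ⟨h1, .refl⟩)
      · exact Or.inr (Or.inl ⟨h1, .refl⟩)
      · exact Or.inl h1
    · have s : conn E b c := .single (Or.inl hE)
      rcases ih with h1 | ⟨h1, h2⟩ | ⟨h1, h2⟩
      · exact Or.inl (h1.trans s)
      · exact Or.inr (Or.inl ⟨h1, h2.trans s⟩)
      · exact Or.inr (Or.inr ⟨h1, h2.trans s⟩)
    · subst hb; subst hc
      rcases ih with h1 | ⟨h1, _⟩ | ⟨h1, _⟩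
      · exact Or.inr (Or.inr ⟨h1, .refl⟩)
      · exact Or.inl h1
      · exact Or.inr (Or.inr ⟨h1, .refl⟩)
    · have s : conn E b c := .single (Or.inr hE)
      rcases ih with h1 | ⟨h1, h2⟩ | ⟨h1, h2⟩
      · exact Or.inl (h1.trans s)
      · exact Or.inr (Or.inl ⟨h1, h2.trans s⟩)
      · exact Or.inr (Or.inr ⟨h1, h2.trans s⟩)

lemma ncomp_le_insert (E : Finset (V × V)) (e : V × V) :
    ncomp E ≤ ncomp (insert e E) + 1 := by
  obtain ⟨e1, e2⟩ := e
  have hresp : ∀ a b : V, conn E a b →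
      (if conn E a e2 then (none : Option (Quotient (compSetoid (insert (e1, e2) E))))
        else some (Quotient.mk _ a))
      = (if conn E b e2 then none else some (Quotient.mk _ b)) := by
    intro a b hab
    by_cases h : conn E a e2
    · have h' : conn E b e2 := (conn_symm hab).trans h
      simp [h, h']
    · have h' : ¬ conn E b e2 := fun hb => h (hab.trans hb)
      simp only [if_neg h, if_neg h']
      exact congrArg some (Quotient.sound (conn_mono (Finset.subset_insert _ _) hab))
  let φ : Quotient (compSetoid E) → Option (Quotient (compSetoid (insert (e1, e2) E))) :=
    Quotient.lift _ hresp
  have hinj : Function.Injective φ := by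
    intro q1 q2
    induction q1 using Quotient.inductionOn with | _ v =>
    induction q2 using Quotient.inductionOn with | _ w =>
    intro hvw
    simp only [φ, Quotient.lift_mk] at hvw
    change (if conn E v e2 then (none : Option (Quotient (compSetoid (insert (e1, e2) E))))
      else some (Quotient.mk _ v)) = (if conn E w e2 then none else some (Quotient.mk _ w)) at hvw
    by_cases hv : conn E v e2 <;> by_cases hw : conn E w e2
    · exact Quotient.sound (hv.trans (conn_symm hw))
    · rw [if_pos hv, if_neg hw] at hvw; exact absurd hvw (by simp)
    · rw [if_neg hv, if_pos hw] at hvw; exact absurd hvw (by simp)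
    · rw [if_neg hv, if_neg hw] at hvw
      have h : conn (insert (e1, e2) E) v w := Quotient.exact (Option.some_injective _ hvw)
      rcases conn_insert h with h1 | ⟨_, h2⟩ | ⟨h1, _⟩
      · exact Quotient.sound h1
      · exact absurd (conn_symm h2) hw
      · exact absurd h1 hv
  calc ncomp E ≤ Fintype.card (Option (Quotient (compSetoid (insert (e1, e2) E)))) :=
        Fintype.card_le_of_injective φ hinj
    _ = ncomp (insert (e1, e2) E) + 1 := Fintype.card_option

lemma card_le_ncomp_add_card (E : Finset (V × V)) :
    Fintype.card V ≤ ncomp E + E.card := by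
  induction E using Finset.induction_on with
  | empty => simp [ncomp_empty]
  | @insert e E he ih =>
    have h1 := ncomp_le_insert E e
    rw [Finset.card_insert_of_notMem he]
    omega

lemma conn_erase_of_conn {E : Finset (V × V)} {e : V × V}
    (he : conn (E.erase e) e.1 e.2) {x y : V} (h : conn E x y) :
    conn (E.erase e) x y := by
  induction h with
  | refl => exact .refl
  | @tail b c _ hbc ih =>
    refine ih.trans ?_
    rcases hbc with hE | hE
    · by_cases hbe : (b, c) = e
      · have h2 : conn (E.erase e) (b, c).1 (b, c).2 := by rw [hbe]; exact he
        exact h2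
      · exact .single (Or.inl (Finset.mem_erase.mpr ⟨hbe, hE⟩))
    · by_cases hbe : (c, b) = e
      · have h2 : conn (E.erase e) (c, b).1 (c, b).2 := by rw [hbe]; exact he
        exact conn_symm h2
      · exact .single (Or.inr (Finset.mem_erase.mpr ⟨hbe, hE⟩))

lemma ncomp_le_one {E : Finset (V × V)} (h : ∀ x y : V, conn E x y) : ncomp E ≤ 1 := by
  refine Fintype.card_le_one_iff.mpr ?_
  intro a b
  induction a using Quotient.inductionOn with | _ v =>
  induction b using Quotient.inductionOn with | _ w =>
  exact Quotient.sound (h v w)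

set_option linter.unusedSectionVars false
lemma length_cyclePairs (vs : List V) : (cyclePairs vs).length = vs.length := by
  simp [cyclePairs]

lemma cyclePairs_getElem (vs : List V) (j : ℕ) (hj : j < vs.length) :
    (cyclePairs vs)[j]'(by rw [length_cyclePairs]; exact hj)
      = (vs[j], vs[(j + 1) % vs.length]'(Nat.mod_lt _ (by omega))) := by
  unfold cyclePairs
  rw [List.getElem_zip]
  congr 1
  have h := List.get_rotate vs 1 ⟨j, by simpa using hj⟩
  simpa using h

lemma mem_cyclePairs_iff {vs : List V} {p : V × V} :
    p ∈ cyclePairs vs ↔ ∃ j : ℕ, ∃ hj : j < vs.length,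
      p = (vs[j], vs[(j + 1) % vs.length]'(Nat.mod_lt _ (by omega))) := by
  constructor
  · intro hp
    obtain ⟨j, hj, hget⟩ := List.getElem_of_mem hp
    have hj' : j < vs.length := by rwa [length_cyclePairs] at hj
    exact ⟨j, hj', by rw [← hget, cyclePairs_getElem vs j hj']⟩
  · rintro ⟨j, hj, rfl⟩
    rw [← cyclePairs_getElem vs j hj]
    exact List.getElem_mem _

lemma mod_small {a n : ℕ} (h : a < 2 * n) : a % n = if a < n then a else a - n := by
  split
  · exact Nat.mod_eq_of_lt ‹_›
  · rw [Nat.mod_eq_sub_mod (by omega)]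
    exact Nat.mod_eq_of_lt (by omega)

lemma nodup_getElem_inj {vs : List V} (hnd : vs.Nodup) {j k : ℕ}
    (hj : j < vs.length) (hk : k < vs.length) (h : vs[j] = vs[k]) : j = k := by
  have := (List.Nodup.get_inj_iff hnd (i := ⟨j, hj⟩) (j := ⟨k, hk⟩)).mp (by simpa using h)
  simpa using Fin.val_eq_val _ _ |>.mpr this

lemma not_swap_mem_cyclePairs {vs : List V} (hnd : vs.Nodup) (h3 : 3 ≤ vs.length)
    {p : V × V} (hp : p ∈ cyclePairs vs) : p.swap ∉ cyclePairs vs := by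
  intro hq
  rw [mem_cyclePairs_iff] at hp hq
  obtain ⟨j, hj, hpe⟩ := hp
  obtain ⟨k, hk, hqe⟩ := hq
  have h1 : p.1 = vs[j] := congrArg Prod.fst hpe
  have h2 : p.2 = vs[(j + 1) % vs.length]'(Nat.mod_lt _ (by omega)) := congrArg Prod.snd hpe
  have h3' : p.2 = vs[k] := congrArg Prod.fst hqe
  have h4 : p.1 = vs[(k + 1) % vs.length]'(Nat.mod_lt _ (by omega)) := congrArg Prod.snd hqe
  have e1 : (j + 1) % vs.length = k :=
    nodup_getElem_inj hnd _ _ (h2 ▸ h3')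
  have e2 : (k + 1) % vs.length = j :=
    nodup_getElem_inj hnd _ _ (h4 ▸ h1)
  have m1 : (j + 1) % vs.length = if j + 1 < vs.length then j + 1 else j + 1 - vs.length :=
    mod_small (by omega)
  have m2 : (k + 1) % vs.length = if k + 1 < vs.length then k + 1 else k + 1 - vs.length :=
    mod_small (by omega)
  split at m1 <;> split at m2 <;> omega

lemma conn_head_getElem {E : Finset (V × V)} {l : List V}
    (hstep : ∀ j : ℕ, ∀ hj : j + 1 < l.length,
      ((l[j]'(by omega), l[j+1]'hj) ∈ E ∨ (l[j+1]'hj, l[j]'(by omega)) ∈ E)) :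
    ∀ j : ℕ, ∀ hj : j < l.length, conn E (l[0]'(by omega)) (l[j]'hj) := by
  intro j
  induction j with
  | zero => intro hj; exact .refl
  | succ k ih => intro hj; exact (ih (by omega)).tail (hstep k hj)

lemma conn_cycle {E : Finset (V × V)} {vs : List V} (hnd : vs.Nodup) (h3 : 3 ≤ vs.length)
    {p₀ : V × V} (hp₀ : p₀ ∈ cyclePairs vs)
    (hstep : ∀ q ∈ cyclePairs vs, q ≠ p₀ → ((q.1, q.2) ∈ E ∨ (q.2, q.1) ∈ E)) :
    conn E p₀.1 p₀.2 := by
  obtain ⟨k, hk, hpe⟩ := mem_cyclePairs_iff.mp hp₀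
  have hn0 : 0 < vs.length := by omega
  set n := vs.length with hn
  set m := (k + 1) % n with hm
  have hmn : m < n := Nat.mod_lt _ hn0
  set l := vs.rotate m with hl
  have hlen : l.length = n := by simp [hl, hn]
  have hndl : l.Nodup := List.nodup_rotate.mpr hnd
  have hlget : ∀ j, ∀ hj : j < n, l[j]'(by omega) = vs[(j + m) % n]'(Nat.mod_lt _ hn0) := by
    intro j hj
    have hjl : j < (vs.rotate m).length := by rw [List.length_rotate]; omega
    have h := List.get_rotate vs m ⟨j, hjl⟩
    simp only [List.get_eq_getElem] at h
    exact h
  have hm' : (k + 1 < n ∧ m = k + 1) ∨ (k + 1 = n ∧ m = 0) := by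
    rw [hm, mod_small (by omega)]
    split <;> omega
  have hmod1 : ∀ a : ℕ, (a % n + 1) % n = (a + 1) % n := by
    intro a
    conv_lhs => rw [← Nat.mod_eq_of_lt (show 1 < n by omega)]
    exact (Nat.add_mod a 1 n).symm
  -- p₀ endpoints
  have hp1 : p₀.1 = vs[k] := congrArg Prod.fst hpe
  have hp2 : p₀.2 = vs[m]'hmn := by
    have := congrArg Prod.snd hpe; simpa [hm] using this
  have hlast : l[n-1]'(by omega) = vs[k] := by
    rw [hlget (n-1) (by omega)]
    congr 1
    rw [mod_small (by omega)]
    rcases hm' with ⟨h1, h2⟩ | ⟨h1, h2⟩ <;> split <;> omega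
  have h0 : l[0]'(by omega) = vs[m]'hmn := by
    rw [hlget 0 (by omega)]
    congr 1
    rw [Nat.mod_eq_of_lt (by omega)]
    omega
  -- steps
  have hsteps : ∀ j : ℕ, ∀ hj : j + 1 < l.length,
      ((l[j]'(by omega), l[j+1]'hj) ∈ E ∨ (l[j+1]'hj, l[j]'(by omega)) ∈ E) := by
    intro j hj
    rw [hlen] at hj
    set q : V × V := (l[j]'(by omega), l[j+1]'(by omega)) with hq
    have hq1 : q.1 = vs[(j + m) % n]'(Nat.mod_lt _ hn0) := hlget j (by omega)
    have hq2 : q.2 = vs[(j + 1 + m) % n]'(Nat.mod_lt _ hn0) := by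
      have := hlget (j+1) (by omega)
      simpa using this
    have hqmem : q ∈ cyclePairs vs := by
      rw [mem_cyclePairs_iff]
      refine ⟨(j + m) % n, Nat.mod_lt _ hn0, ?_⟩
      have harith : ((j + m) % n + 1) % n = (j + 1 + m) % n := by
        rw [hmod1]
        congr 1
        omega
      ext
      · exact hq1
      · rw [hq2]
        congr 1
        exact harith.symm
    have hqne : q ≠ p₀ := by
      intro hqe
      have : q.1 = vs[k] := by rw [hqe, hp1]
      rw [hq1] at this
      have heq : (j + m) % n = k := nodup_getElem_inj hnd _ _ this
      rw [mod_small (by omega)] at heq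
      rcases hm' with ⟨h1, h2⟩ | ⟨h1, h2⟩ <;> split at heq <;> omega
    exact hstep q hqmem hqne
  have hconn := conn_head_getElem hsteps (n-1) (by omega)
  rw [h0, hlast, ← hp1, ← hp2] at hconn
  exact conn_symm hconn
lemma exists_leaf {A T S : Finset (V × V)}
    (hap : ∀ a ∈ A, (a.2, a.1) ∉ A) (hTA : T ⊆ A)
    (hconn : ∀ x y : V, conn T x y) (hcard : T.card + 1 = Fintype.card V)
    (hS : S ⊆ T) (hne : S.Nonempty) :
    ∃ v : V, (S.filter fun e => e.1 = v ∨ e.2 = v).card = 1 := by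
  by_contra hleaf
  push_neg at hleaf
  have hSA : S ⊆ A := hS.trans hTA
  have hnl : ∀ e ∈ S, e.1 ≠ e.2 := by
    intro e he h
    obtain ⟨x, y⟩ := e
    have h' : x = y := h
    subst h'
    exact hap (x, x) (hSA he) (hSA he)
  have hasym : ∀ e ∈ S, (e.2, e.1) ∉ S := fun e he h => hap e (hSA he) (hSA h)
  set adj : V → V → Prop := fun u v => (u, v) ∈ S ∨ (v, u) ∈ S with hadjdef
  have hadjnl : ∀ u, ¬ adj u u := by
    intro u h
    rcases h with h | h <;> exact hnl _ h rfl
  have deg2 : ∀ u v, adj u v → ∃ w, adj v w ∧ w ≠ u := by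
    intro u v h
    set I := S.filter (fun e => e.1 = v ∨ e.2 = v) with hI
    have he₀ : ∃ e₀ ∈ I, (e₀ = (u, v) ∨ e₀ = (v, u)) := by
      rcases h with h | h
      · exact ⟨(u, v), Finset.mem_filter.mpr ⟨h, Or.inr rfl⟩, Or.inl rfl⟩
      · exact ⟨(v, u), Finset.mem_filter.mpr ⟨h, Or.inl rfl⟩, Or.inr rfl⟩
    obtain ⟨e₀, he₀I, he₀val⟩ := he₀
    have h2 : 1 < I.card := by
      have h1 : I.Nonempty := ⟨e₀, he₀I⟩
      have := hleaf v
      rw [← hI] at this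
      have := Finset.card_pos.mpr h1
      omega
    obtain ⟨e₁, he₁I, hne01⟩ := Finset.exists_mem_ne h2 e₀
    have he₁S : e₁ ∈ S := (Finset.mem_filter.mp he₁I).1
    rcases (Finset.mem_filter.mp he₁I).2 with h1 | h1
    · refine ⟨e₁.2, Or.inl (by rw [← h1, Prod.mk.eta]; exact he₁S), ?_⟩
      intro hwu
      have he₁ : e₁ = (v, u) := by rw [← h1, ← hwu, Prod.mk.eta]
      rcases he₀val with h0 | h0
      · exact hasym (u, v) (by rw [← h0]; exact (Finset.mem_filter.mp he₀I).1)
          (by rw [← he₁]; exact he₁S)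
      · exact hne01 (by rw [he₁, ← h0])
    · refine ⟨e₁.1, Or.inr (by rw [← h1, Prod.mk.eta]; exact he₁S), ?_⟩
      intro hwu
      have he₁ : e₁ = (u, v) := by rw [← h1, ← hwu, Prod.mk.eta]
      rcases he₀val with h0 | h0
      · exact hne01 (by rw [he₁, ← h0])
      · exact hasym (v, u) (by rw [← h0]; exact (Finset.mem_filter.mp he₀I).1)
          (by rw [← he₁]; exact he₁S)
  -- build an infinite non-backtracking walk
  obtain ⟨estart, hestart⟩ := hne
  have hadj0 : adj estart.1 estart.2 := Or.inl (by rw [Prod.mk.eta]; exact hestart)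
  let nxt : V × V → V := fun p => if h : ∃ w, adj p.2 w ∧ w ≠ p.1 then h.choose else p.1
  let g : ℕ → V × V := fun n => Nat.rec (estart.1, estart.2) (fun _ p => (p.2, nxt p)) n
  have hgs : ∀ n, g (n + 1) = ((g n).2, nxt (g n)) := fun n => rfl
  have hnxt : ∀ p : V × V, adj p.1 p.2 → adj p.2 (nxt p) ∧ nxt p ≠ p.1 := by
    intro p hp
    have hex : ∃ w, adj p.2 w ∧ w ≠ p.1 := deg2 p.1 p.2 hp
    simp only [nxt, dif_pos hex]
    exact hex.choose_spec
  have hinv : ∀ n, adj (g n).1 (g n).2 := by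
    intro n
    induction n with
    | zero => exact hadj0
    | succ k ih => rw [hgs k]; exact (hnxt (g k) ih).1
  set seq : ℕ → V := fun n => (g n).1 with hseq
  have hadjseq : ∀ n, adj (seq n) (seq (n + 1)) := fun n => hinv n
  have hnb : ∀ n, seq (n + 2) ≠ seq n := by
    intro n
    have : seq (n + 2) = nxt (g n) := rfl
    rw [this]
    exact (hnxt (g n) (hinv n)).2
  -- pigeonhole
  have hrep : ∃ m, ∃ i, i < m ∧ seq i = seq m := by
    obtain ⟨x, y, hxy, hfeq⟩ := Fintype.exists_ne_map_eq_of_card_lt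
      (fun i : Fin (Fintype.card V + 1) => seq i) (by simp)
    rcases lt_or_gt_of_ne (fun h : (x : ℕ) = y => hxy (Fin.ext h)) with h | h
    · exact ⟨y, x, h, hfeq⟩
    · exact ⟨x, y, h, hfeq.symm⟩
  set j₀ := Nat.find hrep with hj₀
  obtain ⟨i₀, hi₀lt, hi₀eq⟩ := Nat.find_spec hrep
  set n₀ := j₀ - i₀ with hn₀
  have hmin : ∀ p q, p < q → q < j₀ → seq p ≠ seq q := by
    intro p q hpq hqj h
    exact Nat.find_min hrep hqj ⟨p, hpq, h⟩
  set vs : List V := (List.range n₀).map (fun t => seq (i₀ + t)) with hvs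
  have hvslen : vs.length = n₀ := by simp [hvs]
  have hvsget : ∀ t, ∀ ht : t < n₀, vs[t]'(by omega) = seq (i₀ + t) := by
    intro t ht
    simp [hvs]
  have hvsnd : vs.Nodup := by
    rw [hvs]
    refine List.Nodup.map_on ?_ List.nodup_range
    intro x hx y hy hxy
    rw [List.mem_range] at hx hy
    by_contra hne'
    rcases lt_or_gt_of_ne hne' with h | h
    · exact hmin (i₀ + x) (i₀ + y) (by omega) (by omega) hxy
    · exact hmin (i₀ + y) (i₀ + x) (by omega) (by omega) hxy.symm
  have hn₀3 : 3 ≤ n₀ := by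
    have h1 : n₀ ≠ 0 := by omega
    have h2 : n₀ ≠ 1 := by
      intro h
      have : seq i₀ = seq (i₀ + 1) := by
        rw [show i₀ + 1 = j₀ by omega] at *
        exact hi₀eq
      exact hadjnl (seq i₀) (this ▸ hadjseq i₀)
    have h3 : n₀ ≠ 2 := by
      intro h
      exact hnb i₀ (by rw [show i₀ + 2 = j₀ by omega]; exact hi₀eq.symm)
    omega
  have hpairs : ∀ p ∈ cyclePairs vs, (p ∈ S ∨ p.swap ∈ S) := by
    intro p hp
    obtain ⟨t, ht, hpe⟩ := mem_cyclePairs_iff.mp hp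
    rw [hvslen] at ht
    have h1 : p.1 = seq (i₀ + t) := by
      have := congrArg Prod.fst hpe; rw [this]; exact hvsget t ht
    by_cases hlastt : t + 1 < n₀
    · have h2 : p.2 = seq (i₀ + t + 1) := by
        have := congrArg Prod.snd hpe; rw [this]
        have : (t + 1) % vs.length = t + 1 := by rw [hvslen]; exact Nat.mod_eq_of_lt hlastt
        simp only [this]
        rw [hvsget (t+1) hlastt]
        congr 1 <;> omega
      have := hadjseq (i₀ + t)
      rw [← h1, ← h2] at this
      exact this.imp id id
    · have ht1 : t + 1 = n₀ := by omega
      have h2 : p.2 = seq i₀ := by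
        have := congrArg Prod.snd hpe; rw [this]
        have hmod : (t + 1) % vs.length = 0 := by rw [hvslen, ht1, Nat.mod_self]
        simp only [hmod]
        rw [hvsget 0 (by omega)]
        congr 1 <;> omega
      have h1' : p.1 = seq (j₀ - 1) := by rw [h1]; congr 1; omega
      have h2' : p.2 = seq j₀ := by rw [h2]; exact hi₀eq ▸ rfl
      have := hadjseq (j₀ - 1)
      rw [show j₀ - 1 + 1 = j₀ by omega] at this
      rw [← h1', ← h2'] at this
      exact this.imp id id
  -- a cycle pair and its tree edge
  obtain ⟨p₀, hp₀mem⟩ : ∃ p, p ∈ cyclePairs vs := by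
    refine List.exists_mem_of_length_pos ?_
    rw [length_cyclePairs, hvslen]
    omega
  obtain ⟨e, heS, hecase⟩ : ∃ e, e ∈ S ∧ (e = p₀ ∨ e = p₀.swap) := by
    rcases hpairs p₀ hp₀mem with h | h
    · exact ⟨p₀, h, Or.inl rfl⟩
    · exact ⟨p₀.swap, h, Or.inr rfl⟩
  have heT : e ∈ T := hS heS
  have hconnrest : conn (T.erase e) p₀.1 p₀.2 := by
    refine conn_cycle hvsnd (by omega) hp₀mem ?_
    intro q hq hqne
    have hqS := hpairs q hq
    have hqnsw : q ≠ p₀.swap := by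
      intro h
      exact (not_swap_mem_cyclePairs hvsnd (by omega) hp₀mem) (by rw [← h]; exact hq)
    rcases hqS with h | h
    · have hqe : q ≠ e := by
        rcases hecase with rfl | rfl
        · exact hqne
        · exact hqnsw
      exact Or.inl (by rw [Prod.mk.eta]; exact Finset.mem_erase.mpr ⟨hqe, hS h⟩)
    · have hqe : q.swap ≠ e := by
        rcases hecase with rfl | rfl
        · intro hh; exact hqnsw (by rw [← hh, Prod.swap_swap])
        · intro hh
          exact hqne (by
            have := congrArg Prod.swap hh
            rwa [Prod.swap_swap, Prod.swap_swap] at this)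
      exact Or.inr (Finset.mem_erase.mpr ⟨hqe, hS h⟩)
  have hconnee : conn (T.erase e) e.1 e.2 := by
    rcases hecase with rfl | rfl
    · exact hconnrest
    · exact conn_symm hconnrest
  have htotal : ∀ x y : V, conn (T.erase e) x y :=
    fun x y => conn_erase_of_conn hconnee (hconn x y)
  have hcount := card_le_ncomp_add_card (T.erase e)
  have h1 := ncomp_le_one htotal
  rw [Finset.card_erase_of_mem heT] at hcount
  have hTpos : 0 < T.card := Finset.card_pos.mpr ⟨e, heT⟩
  omega


lemma flow_unique (N : Network V) (hN : N.Wellformed) {T : Finset (V × V)}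
    (hT : IsSpanningTree N.A T) {g g' : V × V → ℤ} (hg : N.Feasible g) (hg' : N.Feasible g')
    (hagree : ∀ a ∈ N.A \ T, g a = g' a) : g = g' := by
  by_contra hne
  obtain ⟨hTA, hconnT, hcardT⟩ := hT
  set d : V × V → ℤ := fun e => g e - g' e with hd
  set S : Finset (V × V) := T.filter (fun e => d e ≠ 0) with hS
  have hST : S ⊆ T := Finset.filter_subset _ _
  have hdz : ∀ e, e ∉ S → d e = 0 := by
    intro e he
    by_cases heA : e ∈ N.A
    · by_cases heT : e ∈ T
      · by_contra hdne
        exact he (Finset.mem_filter.mpr ⟨heT, hdne⟩)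
      · have := hagree e (Finset.mem_sdiff.mpr ⟨heA, heT⟩)
        simp [hd, this]
    · simp [hd, hg.2.1 e heA, hg'.2.1 e heA]
  have hSne : S.Nonempty := by
    have : ∃ e, g e ≠ g' e := by
      by_contra h
      push_neg at h
      exact hne (funext h)
    obtain ⟨e, he⟩ := this
    have hdne : d e ≠ 0 := fun h => he (by linarith [sub_eq_zero.mp (hd ▸ h)])
    refine ⟨e, ?_⟩
    by_contra heS
    exact hdne (hdz e heS)
  obtain ⟨v, hv⟩ := exists_leaf hN.1 hTA (fun x y => hconnT x y) hcardT hST hSne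
  obtain ⟨e₀, he₀⟩ := Finset.card_eq_one.mp hv
  have he₀S : e₀ ∈ S ∧ (e₀.1 = v ∨ e₀.2 = v) := by
    have : e₀ ∈ S.filter (fun e => e.1 = v ∨ e.2 = v) := by rw [he₀]; exact Finset.mem_singleton_self _
    exact Finset.mem_filter.mp this
  have he₀T : e₀ ∈ T := hST he₀S.1
  have he₀A : e₀ ∈ N.A := hTA he₀T
  have hloops : e₀.1 ≠ e₀.2 := by
    intro h
    obtain ⟨x, y⟩ := e₀
    have h' : x = y := h
    subst h'
    exact hN.1 (x, x) he₀A he₀A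
  have hd0 : d e₀ ≠ 0 := (Finset.mem_filter.mp he₀S.1).2
  -- balance of d at v
  have hbal : (∑ e ∈ N.A.filter (fun e => e.1 = v), d e)
      - ∑ e ∈ N.A.filter (fun e => e.2 = v), d e = 0 := by
    have h1 := hg.2.2 v
    have h2 := hg'.2.2 v
    simp only [hd]
    rw [Finset.sum_sub_distrib, Finset.sum_sub_distrib]
    linarith
  have hrestrict : ∀ p : V × V → Prop, ∀ hp : DecidablePred p,
      ∑ e ∈ N.A.filter p, d e = ∑ e ∈ S.filter p, d e := by
    intro p hp
    refine (Finset.sum_subset ?_ ?_).symm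
    · exact Finset.filter_subset_filter _ (hST.trans hTA)
    · intro e heA heS
      refine hdz e ?_
      intro heSmem
      exact heS (Finset.mem_filter.mpr ⟨heSmem, (Finset.mem_filter.mp heA).2⟩)
  rw [hrestrict _ _, hrestrict _ _] at hbal
  rcases he₀S.2 with hv1 | hv2
  · have hf1 : S.filter (fun e => e.1 = v) = {e₀} := by
      apply Finset.Subset.antisymm
      · intro e he
        rw [← he₀]
        exact Finset.mem_filter.mpr ⟨(Finset.mem_filter.mp he).1, Or.inl (Finset.mem_filter.mp he).2⟩
      · intro e he
        rw [Finset.mem_singleton] at he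
        subst he
        exact Finset.mem_filter.mpr ⟨he₀S.1, hv1⟩
    have hf2 : S.filter (fun e => e.2 = v) = ∅ := by
      rw [Finset.eq_empty_iff_forall_notMem]
      intro e he
      have heI : e ∈ S.filter (fun e => e.1 = v ∨ e.2 = v) :=
        Finset.mem_filter.mpr ⟨(Finset.mem_filter.mp he).1, Or.inr (Finset.mem_filter.mp he).2⟩
      rw [he₀, Finset.mem_singleton] at heI
      subst heI
      exact hloops (by rw [hv1, (Finset.mem_filter.mp he).2])
    rw [hf1, hf2] at hbal
    simp at hbal
    exact hd0 hbal
  · have hne1 : e₀.1 ≠ v := fun h => hloops (by rw [h, hv2])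
    have hf1 : S.filter (fun e => e.1 = v) = ∅ := by
      rw [Finset.eq_empty_iff_forall_notMem]
      intro e he
      have heI : e ∈ S.filter (fun e => e.1 = v ∨ e.2 = v) :=
        Finset.mem_filter.mpr ⟨(Finset.mem_filter.mp he).1, Or.inl (Finset.mem_filter.mp he).2⟩
      rw [he₀, Finset.mem_singleton] at heI
      subst heI
      exact hne1 (Finset.mem_filter.mp he).2
    have hf2 : S.filter (fun e => e.2 = v) = {e₀} := by
      apply Finset.Subset.antisymm
      · intro e he
        rw [← he₀]
        exact Finset.mem_filter.mpr ⟨(Finset.mem_filter.mp he).1, Or.inr (Finset.mem_filter.mp he).2⟩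
      · intro e he
        rw [Finset.mem_singleton] at he
        subst he
        exact Finset.mem_filter.mpr ⟨he₀S.1, hv2⟩
    rw [hf1, hf2] at hbal
    simp at hbal
    exact hd0 hbal

lemma chiList_eq_one {vs : List V} {p : V × V} (hp : p ∈ cyclePairs vs) :
    chiList vs p = 1 := by
  unfold chiList
  rw [if_pos hp]

lemma chiList_eq_neg {vs : List V} (hnd : vs.Nodup) (h3 : 3 ≤ vs.length) {p : V × V}
    (hp : p.swap ∈ cyclePairs vs) : chiList vs p = -1 := by
  have hnp : p ∉ cyclePairs vs := by
    intro h
    exact not_swap_mem_cyclePairs hnd h3 h hp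
  unfold chiList
  rw [if_neg hnp, if_pos hp]

lemma chiList_ne_zero {vs : List V} {p : V × V} (h : chiList vs p ≠ 0) :
    p ∈ cyclePairs vs ∨ p.swap ∈ cyclePairs vs := by
  unfold chiList at h
  by_cases h1 : p ∈ cyclePairs vs
  · exact Or.inl h1
  · by_cases h2 : p.swap ∈ cyclePairs vs
    · exact Or.inr h2
    · rw [if_neg h1, if_neg h2] at h
      exact absurd rfl h

lemma chiList_vals (vs : List V) (p : V × V) :
    chiList vs p = 1 ∨ chiList vs p = 0 ∨ chiList vs p = -1 := by
  unfold chiList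
  split
  · exact Or.inl rfl
  · split
    · exact Or.inr (Or.inr rfl)
    · exact Or.inr (Or.inl rfl)

lemma nodup_cyclePairs {vs : List V} (hnd : vs.Nodup) : (cyclePairs vs).Nodup := by
  have hmap : (cyclePairs vs).map Prod.fst = vs := by
    unfold cyclePairs
    exact List.map_fst_zip (by simp)
  exact List.Nodup.of_map Prod.fst (by rwa [hmap])

lemma chiList_balance {A' : Finset (V × V)} (hap : ∀ a ∈ A', (a.2, a.1) ∉ A')
    {vs : List V} (hnd : vs.Nodup) (h3 : 3 ≤ vs.length)
    (hcov : ∀ p ∈ cyclePairs vs, p ∈ A' ∨ p.swap ∈ A') (i : V) :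
    ∑ e ∈ A'.filter (fun e => e.1 = i), chiList vs e
      = ∑ e ∈ A'.filter (fun e => e.2 = i), chiList vs e := by
  set φ : V × V → ℤ := fun p => (if p.1 = i then (1:ℤ) else 0) - (if p.2 = i then 1 else 0) with hφ
  have key : ∑ e ∈ A', chiList vs e * φ e = 0 := by
    have hsub : A'.filter (fun e => chiList vs e ≠ 0) ⊆ A' := Finset.filter_subset _ _
    rw [← Finset.sum_subset hsub (fun e he hne => by
      have : chiList vs e = 0 := by
        by_contra hcon
        exact hne (Finset.mem_filter.mpr ⟨he, hcon⟩)
      rw [this, zero_mul])]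
    have hbij : ∑ e ∈ A'.filter (fun e => chiList vs e ≠ 0), chiList vs e * φ e
        = ∑ p ∈ (cyclePairs vs).toFinset, φ p := by
      refine Finset.sum_nbij' (fun e => if e ∈ cyclePairs vs then e else e.swap)
        (fun p => if p ∈ A' then p else p.swap) ?_ ?_ ?_ ?_ ?_
      · intro e he
        obtain ⟨heA, hne⟩ := Finset.mem_filter.mp he
        rcases chiList_ne_zero hne with h | h
        · rw [if_pos h]; exact List.mem_toFinset.mpr h
        · rw [if_neg (fun hc => not_swap_mem_cyclePairs hnd h3 hc h)]
          exact List.mem_toFinset.mpr h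
      · intro p hp
        have hpcp : p ∈ cyclePairs vs := List.mem_toFinset.mp hp
        rcases hcov p hpcp with h | h
        · rw [if_pos h]
          exact Finset.mem_filter.mpr ⟨h, by rw [chiList_eq_one hpcp]; norm_num⟩
        · rw [if_neg (fun hc => hap _ h (by simpa using hc))]
          refine Finset.mem_filter.mpr ⟨h, ?_⟩
          rw [chiList_eq_neg hnd h3 (by rwa [Prod.swap_swap])]
          norm_num
      · intro e he
        obtain ⟨heA, hne⟩ := Finset.mem_filter.mp he
        by_cases h : e ∈ cyclePairs vs
        · rw [if_pos h, if_pos heA]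
        · rw [if_neg h]
          rw [if_neg (show e.swap ∉ A' from hap _ heA), Prod.swap_swap]
      · intro p hp
        have hpcp : p ∈ cyclePairs vs := List.mem_toFinset.mp hp
        by_cases h : p ∈ A'
        · rw [if_pos h, if_pos hpcp]
        · rw [if_neg h, if_neg (fun hc => not_swap_mem_cyclePairs hnd h3 hpcp hc), Prod.swap_swap]
      · intro e he
        obtain ⟨heA, hne⟩ := Finset.mem_filter.mp he
        by_cases h : e ∈ cyclePairs vs
        · rw [if_pos h, chiList_eq_one h, one_mul]
        · have hsw : e.swap ∈ cyclePairs vs := by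
            rcases chiList_ne_zero hne with h' | h'
            · exact absurd h' h
            · exact h'
          rw [if_neg h, chiList_eq_neg hnd h3 hsw]
          simp only [hφ, Prod.fst_swap, Prod.snd_swap]
          ring
    rw [hbij, List.sum_toFinset _ (nodup_cyclePairs hnd)]
    have hsplit : (List.map φ (cyclePairs vs)).sum
        = (List.map (fun p : V × V => if p.1 = i then (1:ℤ) else 0) (cyclePairs vs)).sum
          - (List.map (fun p : V × V => if p.2 = i then (1:ℤ) else 0) (cyclePairs vs)).sum := by
      induction cyclePairs vs with
      | nil => simp
      | cons q l ih => simp only [List.map_cons, List.sum_cons, ih]; simp only [hφ]; ring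
    rw [hsplit]
    have hfst : (List.map (fun p : V × V => if p.1 = i then (1:ℤ) else 0) (cyclePairs vs)).sum
        = (List.map (fun v => if v = i then (1:ℤ) else 0) vs).sum := by
      have h1 : (cyclePairs vs).map Prod.fst = vs := by
        unfold cyclePairs
        exact List.map_fst_zip (by simp)
      conv_rhs => rw [← h1, List.map_map]
      rfl
    have hsnd : (List.map (fun p : V × V => if p.2 = i then (1:ℤ) else 0) (cyclePairs vs)).sum
        = (List.map (fun v => if v = i then (1:ℤ) else 0) (vs.rotate 1)).sum := by
      have h1 : (cyclePairs vs).map Prod.snd = vs.rotate 1 := by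
        unfold cyclePairs
        exact List.map_snd_zip (by simp)
      conv_rhs => rw [← h1, List.map_map]
      rfl
    rw [hfst, hsnd, List.Perm.sum_eq (List.Perm.map _ (List.rotate_perm vs 1))]
    ring
  have hexp : ∀ q : V × V → Prop, ∀ hq : DecidablePred q,
      ∑ e ∈ A'.filter q, chiList vs e = ∑ e ∈ A', chiList vs e * (if q e then 1 else 0) := by
    intro q hq
    rw [Finset.sum_filter]
    refine Finset.sum_congr rfl ?_
    intro e he
    split <;> ring
  rw [hexp _ _, hexp _ _]
  have := key
  rw [show (∑ e ∈ A', chiList vs e * φ e)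
      = ∑ e ∈ A', chiList vs e * (if e.1 = i then 1 else 0)
        - ∑ e ∈ A', chiList vs e * (if e.2 = i then 1 else 0) from by
    rw [← Finset.sum_sub_distrib]
    refine Finset.sum_congr rfl ?_
    intro e he
    simp only [hφ]
    ring] at this
  linarith

lemma pushed_feasible (N : Network V) (hl : ∀ a ∈ N.A, N.l a = 0)
    {f : V × V → ℤ} (hf : N.Feasible f) {χ : V × V → ℤ}
    (hz : ∀ e, e ∉ N.A → χ e = 0)
    (hbal : ∀ i : V, ∑ e ∈ N.A.filter (fun e => e.1 = i), χ e
        = ∑ e ∈ N.A.filter (fun e => e.2 = i), χ e)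
    {t : ℤ} (ht : 0 ≤ t)
    (hcap : ∀ e ∈ N.A, χ e ≠ 0 → t ≤ (if χ e = 1 then N.u e - f e else f e))
    (hval : ∀ e, χ e = 1 ∨ χ e = 0 ∨ χ e = -1) :
    N.Feasible (fun e => f e + t * χ e) := by
  obtain ⟨hcapf, hz', hbal'⟩ := hf
  refine ⟨?_, ?_, ?_⟩
  · intro e he
    dsimp only
    have hfl := (hcapf e he).1
    have hfu := (hcapf e he).2
    rw [hl e he] at hfl
    rcases hval e with h1 | h0 | hm
    · have hc := hcap e he (by rw [h1]; norm_num)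
      rw [if_pos h1] at hc
      rw [h1, hl e he]
      constructor <;> linarith
    · rw [h0, hl e he]
      constructor <;> linarith
    · have hc := hcap e he (by rw [hm]; norm_num)
      rw [if_neg (by rw [hm]; norm_num)] at hc
      rw [hm, hl e he]
      constructor <;> linarith
  · intro e he
    dsimp only
    rw [hz' e he, hz e he]
    ring
  · intro i
    dsimp only
    have h1 := hbal' i
    have h2 := hbal i
    rw [Finset.sum_add_distrib, Finset.sum_add_distrib, ← Finset.mul_sum, ← Finset.mul_sum, h2]
    linarith

lemma mem_cyclePairs_cons (x y : V) (rest : List V) :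
    (x, y) ∈ cyclePairs (x :: y :: rest) := by
  unfold cyclePairs
  rw [show (x :: y :: rest).rotate 1 = y :: (rest ++ [x]) from by
    rw [List.rotate_cons_succ, List.rotate_zero]; rfl]
  rw [List.zip_cons_cons]
  exact List.mem_cons_self

lemma inducedCycle_len {A T : Finset (V × V)} (hap : ∀ a ∈ A, (a.2, a.1) ∉ A) (hTA : T ⊆ A)
    {a : V × V} (ha : a ∈ A) (haT : a ∉ T) {vs : List V} (h : IsInducedCycleList A T a vs) :
    3 ≤ vs.length := by
  obtain ⟨hnd, ⟨rest, hrest⟩, hcl⟩ := h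
  subst hrest
  rcases rest with _ | ⟨z, rest'⟩
  · exfalso
    have hp : (a.2, a.1) ∈ cyclePairs [a.1, a.2] := by
      unfold cyclePairs
      rw [show ([a.1, a.2] : List V).rotate 1 = [a.2, a.1] from by
        rw [List.rotate_cons_succ, List.rotate_zero]; rfl]
      rw [List.zip_cons_cons, List.zip_cons_cons]
      exact List.mem_cons.mpr (Or.inr (List.mem_cons_self))
    rcases hcl _ hp with h1 | h2 | h3
    · have h' : a.2 = a.1 := congrArg Prod.fst h1
      simp [h'] at hnd
    · exact hap a ha (hTA h2)
    · refine haT ?_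
      have h' : (a.2, a.1).swap = a := by
        rw [Prod.swap_prod_mk, Prod.mk.eta]
      rwa [h'] at h3
  · simp only [List.length_cons]
    omega

lemma chiList_off {A T : Finset (V × V)} (hap : ∀ a ∈ A, (a.2, a.1) ∉ A) (hTA : T ⊆ A)
    {a b : V × V} (ha : a ∈ A) (hb : b ∈ A) (hbT : b ∉ T) (hba : b ≠ a)
    {vs : List V} (hcl : ∀ p ∈ cyclePairs vs, p = a ∨ p ∈ T ∨ p.swap ∈ T) :
    chiList vs b = 0 := by
  have h1 : b ∉ cyclePairs vs := by
    intro h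
    rcases hcl _ h with h1 | h2 | h3
    · exact hba h1
    · exact hbT h2
    · exact (show b.swap ∉ A from hap b hb) (hTA h3)
  have h2 : b.swap ∉ cyclePairs vs := by
    intro h
    rcases hcl _ h with h1 | h2 | h3
    · refine (show a.swap ∉ A from hap a ha) ?_
      rw [← h1, Prod.swap_swap]
      exact hb
    · exact (show b.swap ∉ A from hap b hb) (hTA h2)
    · exact hbT (by rwa [Prod.swap_swap] at h3)
  unfold chiList
  rw [if_neg h1, if_neg h2]

end FeaHelpers

/-- Bounds on the number `Fea` of feasible integer flows for a feasible tree solution `f`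
with tree structure `(T,L,U)`:
`∑_{a ∉ T} u(C_a) ≤ Fea ≤ ∏_{a ∉ T} (u_a + 1)`. -/
theorem card_feasible_bounds (N : Network V) (hN : N.Wellformed)
    (hl : ∀ a ∈ N.A, N.l a = 0)
    (f : V × V → ℤ) (T L U : Finset (V × V)) (hts : N.IsTreeSolution f T L U)
    (vsf : V × V → List V)
    (hvs : ∀ a ∈ N.A \ T, IsInducedCycleList N.A T a (vsf a)) :
    (∑ a ∈ N.A \ T, freeCap N f (chiInd N L a (vsf a))) ≤
        ({g : V × V → ℤ | N.Feasible g}.ncard : ℤ) ∧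
      ({g : V × V → ℤ | N.Feasible g}.ncard : ℤ) ≤ ∏ a ∈ N.A \ T, (N.u a + 1) := by
  classical
  obtain ⟨hf, hTsp, hLU, hdisjLU, hLl, hUu⟩ := hts
  obtain ⟨hTA, hconnT, hcardT⟩ := hTsp
  have hap := hN.1
  have hfl0 : ∀ e ∈ N.A, 0 ≤ f e := fun e he => by
    have h := (hf.1 e he).1; rwa [hl e he] at h
  have hfu : ∀ e ∈ N.A, f e ≤ N.u e := fun e he => (hf.1 e he).2
  have hAmem : ∀ a ∈ N.A \ T, a ∈ N.A ∧ a ∉ T := fun a ha => Finset.mem_sdiff.mp ha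
  have hnd : ∀ a ∈ N.A \ T, (vsf a).Nodup := fun a ha => (hvs a ha).1
  have h3 : ∀ a ∈ N.A \ T, 3 ≤ (vsf a).length := fun a ha =>
    inducedCycle_len hap hTA (hAmem a ha).1 (hAmem a ha).2 (hvs a ha)
  have hfirst : ∀ a ∈ N.A \ T, a ∈ cyclePairs (vsf a) := by
    intro a ha
    obtain ⟨rest, hrest⟩ := (hvs a ha).2.1
    rw [hrest]
    have h := mem_cyclePairs_cons a.1 a.2 rest
    rwa [Prod.mk.eta] at h
  have hχval : ∀ a : V × V, ∀ e, chiInd N L a (vsf a) e = 1 ∨ chiInd N L a (vsf a) e = 0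
      ∨ chiInd N L a (vsf a) e = -1 := by
    intro a e
    unfold chiInd
    split
    · split
      · exact chiList_vals _ _
      · rcases chiList_vals (vsf a) e with h | h | h <;> rw [h] <;> norm_num
    · exact Or.inr (Or.inl rfl)
  have hχz : ∀ a : V × V, ∀ e, e ∉ N.A → chiInd N L a (vsf a) e = 0 := by
    intro a e he
    unfold chiInd
    rw [if_neg he]
  have hχa : ∀ a ∈ N.A \ T, chiInd N L a (vsf a) a = 1 ∨ chiInd N L a (vsf a) a = -1 := by
    intro a ha
    have h1 : chiList (vsf a) a = 1 := chiList_eq_one (hfirst a ha)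
    unfold chiInd
    rw [if_pos (hAmem a ha).1, h1]
    split
    · exact Or.inl rfl
    · exact Or.inr rfl
  have hχa0 : ∀ a ∈ N.A \ T, chiInd N L a (vsf a) a ≠ 0 := by
    intro a ha
    rcases hχa a ha with h | h <;> rw [h] <;> norm_num
  have hχoff : ∀ a ∈ N.A \ T, ∀ b ∈ N.A \ T, b ≠ a → chiInd N L a (vsf a) b = 0 := by
    intro a ha b hb hba
    have h0 : chiList (vsf a) b = 0 :=
      chiList_off hap hTA (hAmem a ha).1 (hAmem b hb).1 (hAmem b hb).2 hba (hvs a ha).2.2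
    unfold chiInd
    rw [h0]
    split
    · split <;> norm_num
    · rfl
  have hχbal : ∀ a ∈ N.A \ T, ∀ i : V,
      ∑ e ∈ N.A.filter (fun e => e.1 = i), chiInd N L a (vsf a) e
        = ∑ e ∈ N.A.filter (fun e => e.2 = i), chiInd N L a (vsf a) e := by
    intro a ha i
    have hcov : ∀ p ∈ cyclePairs (vsf a), p ∈ N.A ∨ p.swap ∈ N.A := by
      intro p hp
      rcases (hvs a ha).2.2 p hp with h1 | h2 | h3'
      · exact Or.inl (h1 ▸ (hAmem a ha).1)
      · exact Or.inl (hTA h2)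
      · exact Or.inr (hTA h3')
    have hbase := chiList_balance hap (hnd a ha) (h3 a ha) hcov i
    have hsgn : ∀ p : V × V → Prop, ∀ hp : DecidablePred p,
        ∑ e ∈ N.A.filter p, chiInd N L a (vsf a) e
          = (if a ∈ L then 1 else -1) * ∑ e ∈ N.A.filter p, chiList (vsf a) e := by
      intro p hp
      rw [Finset.mul_sum]
      refine Finset.sum_congr rfl ?_
      intro e he
      have heA : e ∈ N.A := (Finset.mem_filter.mp he).1
      unfold chiInd
      rw [if_pos heA]
      split <;> ring
    rw [hsgn _ _, hsgn _ _, hbase]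
  have hlb : ∀ a : V × V, ∀ x ∈ {x : ℤ | ∃ e ∈ N.A, chiInd N L a (vsf a) e ≠ 0 ∧
      x = if chiInd N L a (vsf a) e = 1 then N.u e - f e else f e}, (0:ℤ) ≤ x := by
    intro a x hx
    obtain ⟨e, he, hne, hxe⟩ := hx
    rw [hxe]
    split
    · have := hfu e he; linarith
    · exact hfl0 e he
  have hcap0 : ∀ a ∈ N.A \ T, 0 ≤ freeCap N f (chiInd N L a (vsf a)) := by
    intro a ha
    exact le_csInf ⟨_, ⟨a, (hAmem a ha).1, hχa0 a ha, rfl⟩⟩ (hlb a)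
  have hcaple : ∀ a ∈ N.A \ T, ∀ e ∈ N.A, chiInd N L a (vsf a) e ≠ 0 →
      freeCap N f (chiInd N L a (vsf a)) ≤
        (if chiInd N L a (vsf a) e = 1 then N.u e - f e else f e) := by
    intro a ha e he hne
    exact csInf_le ⟨0, hlb a⟩ ⟨e, he, hne, rfl⟩
  have hfeas : ∀ a ∈ N.A \ T, ∀ t : ℤ, 0 ≤ t → t ≤ freeCap N f (chiInd N L a (vsf a)) →
      N.Feasible (fun e => f e + t * chiInd N L a (vsf a) e) := by
    intro a ha t ht0 htc
    exact pushed_feasible N hl hf (hχz a) (hχbal a ha) ht0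
      (fun e he hne => le_trans htc (hcaple a ha e he hne)) (hχval a)
  -- upper bound
  let Φ : ↥{g : V × V → ℤ | N.Feasible g} →
      ((a : {x // x ∈ N.A \ T}) → {y : ℤ // y ∈ Finset.Icc (0:ℤ) (N.u a.1)}) :=
    fun g a => ⟨g.1 a.1, by
      have haA : a.1 ∈ N.A := (Finset.mem_sdiff.mp a.2).1
      rw [Finset.mem_Icc]
      have h1 := (g.2.1 a.1 haA)
      rwa [hl a.1 haA] at h1⟩
  have hΦinj : Function.Injective Φ := by
    intro g g' h
    refine Subtype.ext (flow_unique N hN ⟨hTA, hconnT, hcardT⟩ g.2 g'.2 ?_)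
    intro a ha
    have h1 := congrFun h ⟨a, ha⟩
    exact congrArg Subtype.val h1
  have hfinite : Finite ↥{g : V × V → ℤ | N.Feasible g} := Finite.of_injective Φ hΦinj
  constructor
  · -- lower bound
    set F : Finset ((_ : V × V) × ℤ) :=
      (N.A \ T).sigma (fun a => Finset.Icc 1 (freeCap N f (chiInd N L a (vsf a)))) with hF
    let Ψ : ↥F → ↥{g : V × V → ℤ | N.Feasible g} := fun x =>
      ⟨fun e => f e + x.1.2 * chiInd N L x.1.1 (vsf x.1.1) e, by
        have hx := Finset.mem_sigma.mp x.2
        have ht := Finset.mem_Icc.mp hx.2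
        exact hfeas x.1.1 hx.1 x.1.2 (by linarith [ht.1]) ht.2⟩
    have hΨinj : Function.Injective Ψ := by
      rintro ⟨⟨a, t⟩, hmem⟩ ⟨⟨b, s⟩, hmem'⟩ hxy
      have hx := Finset.mem_sigma.mp hmem
      have hy := Finset.mem_sigma.mp hmem'
      have htx := Finset.mem_Icc.mp hx.2
      have hty := Finset.mem_Icc.mp hy.2
      dsimp only at hx hy htx hty
      have hval : ∀ e, f e + t * chiInd N L a (vsf a) e = f e + s * chiInd N L b (vsf b) e :=
        fun e => congrFun (congrArg Subtype.val hxy) e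
      have hab : a = b := by
        by_contra hne
        have h1 := hval a
        rw [hχoff b hy.1 a hx.1 hne] at h1
        rcases hχa a hx.1 with h | h <;> rw [h] at h1 <;> omega
      subst hab
      have hts' : t = s := by
        have h1 := hval a
        rcases hχa a hx.1 with h | h <;> rw [h] at h1 <;> omega
      subst hts'
      rfl
    have h1 : Nat.card ↥F ≤ Nat.card ↥{g : V × V → ℤ | N.Feasible g} :=
      Nat.card_le_card_of_injective Ψ hΨinj
    have h2 : Nat.card ↥F = F.card := by rw [Nat.card_eq_fintype_card, Fintype.card_coe]
    have h3' : F.card = ∑ a ∈ N.A \ T, (freeCap N f (chiInd N L a (vsf a))).toNat := by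
      rw [hF, Finset.card_sigma]
      refine Finset.sum_congr rfl (fun a ha => ?_)
      rw [Int.card_Icc]
      congr 1
      ring
    have h4 : (∑ a ∈ N.A \ T, freeCap N f (chiInd N L a (vsf a)))
        = ((∑ a ∈ N.A \ T, (freeCap N f (chiInd N L a (vsf a))).toNat : ℕ) : ℤ) := by
      rw [Nat.cast_sum]
      exact Finset.sum_congr rfl (fun a ha => (Int.toNat_of_nonneg (hcap0 a ha)).symm)
    rw [h4, ← Nat.card_coe_set_eq]
    exact_mod_cast h3' ▸ h2 ▸ h1
  · -- upper bound
    have h1 : Nat.card ↥{g : V × V → ℤ | N.Feasible g}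
        ≤ Nat.card ((a : {x // x ∈ N.A \ T}) → {y : ℤ // y ∈ Finset.Icc (0:ℤ) (N.u a.1)}) :=
      Nat.card_le_card_of_injective Φ hΦinj
    have h2 : Nat.card ((a : {x // x ∈ N.A \ T}) → {y : ℤ // y ∈ Finset.Icc (0:ℤ) (N.u a.1)})
        = ∏ a ∈ N.A \ T, (N.u a + 1).toNat := by
      rw [Nat.card_eq_fintype_card, Fintype.card_pi]
      calc (∏ a : {x // x ∈ N.A \ T}, Fintype.card {y : ℤ // y ∈ Finset.Icc (0:ℤ) (N.u a.1)})
          = ∏ a : {x // x ∈ N.A \ T}, ((N.u a.1 + 1).toNat) := by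
            refine Finset.prod_congr rfl (fun a _ => ?_)
            rw [Fintype.card_coe, Int.card_Icc]
            congr 1
            ring
        _ = ∏ a ∈ N.A \ T, (N.u a + 1).toNat :=
            Finset.prod_coe_sort (N.A \ T) (fun x => (N.u x + 1).toNat)
    rw [← Nat.card_coe_set_eq]
    calc (Nat.card ↥{g : V × V → ℤ | N.Feasible g} : ℤ)
        ≤ ((∏ a ∈ N.A \ T, (N.u a + 1).toNat : ℕ) : ℤ) := by exact_mod_cast h2 ▸ h1
      _ = ∏ a ∈ N.A \ T, (N.u a + 1) := by
          rw [Nat.cast_prod]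
          refine Finset.prod_congr rfl (fun a ha => ?_)
          have haA : a ∈ N.A := (Finset.mem_sdiff.mp ha).1
          refine Int.toNat_of_nonneg ?_
          have h5 := (hN.2 a haA).1
          have h6 := (hN.2 a haA).2
          omega
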